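/- arXiv:2103.05417 — 6 statements merged into one kernel-verified Lean document; each statement's English description precedes it below -/
import Mathlib

section
/- Each color class of a 2-distinguishing coloring of a graph G is a determining set for G; consequently, if G is 2-distinguishable then det(G) ≤ ρ(G). -/
open SimpleGraph

/-- The generalized Mycielskian `μ_t(G)`: vertices are `some (s, i)` for levels
`0 ≤ s ≤ t` (level `0` being the original vertices) plus a root `none`. -/
def Mycielskian {V : Type*} (G : SimpleGraph V) (t : ℕ) :
    SimpleGraph (Option (Fin (t + 1) × V)) where
  Adj x y :=
    match x, y with
    | none, none => False
    | none, some (s, _) => s.val = t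
    | some (s, _), none => s.val = t
    | some (s, i), some (r, j) =>
        G.Adj i j ∧ ((s.val = 0 ∧ r.val = 0) ∨ s.val + 1 = r.val ∨ r.val + 1 = s.val)
  symm := by
    constructor
    rintro (_ | ⟨s, i⟩) (_ | ⟨r, j⟩) h
    · exact h
    · exact h
    · exact h
    · exact ⟨h.1.symm, by tauto⟩
  loopless := by
    constructor
    rintro (_ | ⟨s, i⟩) h
    · exact h
    · exact G.loopless.irrefl i h.1

/-- `S` is a determining set for `G`: the only automorphism fixing `S` pointwise
is the identity. -/
def IsDetermining {V : Type*} (G : SimpleGraph V) (S : Set V) : Prop :=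
  ∀ φ : G ≃g G, (∀ v ∈ S, φ v = v) → ∀ v, φ v = v

/-- The determining number of `G`. -/
noncomputable def detNum {V : Type*} (G : SimpleGraph V) : ℕ :=
  sInf {n | ∃ S : Finset V, S.card = n ∧ IsDetermining G ↑S}

/-- A coloring is distinguishing if no nontrivial automorphism preserves all
color classes. -/
def IsDistinguishing {V : Type*} (G : SimpleGraph V) {C : Type*} (c : V → C) : Prop :=
  ∀ φ : G ≃g G, (∀ v, c (φ v) = c v) → ∀ v, φ v = v

/-- The distinguishing number of `G`. -/
noncomputable def distNum {V : Type*} (G : SimpleGraph V) : ℕ :=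
  sInf {d | ∃ c : V → Fin d, IsDistinguishing G c}

/-- The cost of 2-distinguishing: the minimum size of a color class over all
2-distinguishing colorings. -/
noncomputable def cost2 {V : Type*} (G : SimpleGraph V) [Fintype V] : ℕ :=
  sInf {n | ∃ c : V → Bool, IsDistinguishing G c ∧
    n = (Finset.univ.filter fun v => c v = true).card}

/-- The twin equivalence relation: equal open neighborhoods. -/
def twinSetoid {V : Type*} (G : SimpleGraph V) : Setoid V where
  r x y := G.neighborSet x = G.neighborSet y
  iseqv := ⟨fun _ => rfl, Eq.symm, Eq.trans⟩

/-- The twin quotient graph `G̃`. -/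
def twinQuotient {V : Type*} (G : SimpleGraph V) :
    SimpleGraph (Quotient (twinSetoid G)) where
  Adj a b := ∃ p q : V, Quotient.mk (twinSetoid G) p = a ∧
    Quotient.mk (twinSetoid G) q = b ∧ G.Adj p q
  symm := by constructor; rintro a b ⟨p, q, hp, hq, h⟩; exact ⟨q, p, hq, hp, h.symm⟩
  loopless := by
    constructor
    rintro a ⟨p, q, rfl, hq, h⟩
    have htw : G.neighborSet q = G.neighborSet p := Quotient.exact hq
    have hmem : q ∈ G.neighborSet p := h
    rw [← htw] at hmem
    exact G.loopless.irrefl q hmem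

/-- A twin cover: contains at least one of every pair of distinct twins. -/
def IsTwinCover {V : Type*} (G : SimpleGraph V) (T : Set V) : Prop :=
  ∀ x y : V, x ≠ y → G.neighborSet x = G.neighborSet y → x ∈ T ∨ y ∈ T

/-- A minimum twin cover. -/
def IsMinTwinCover {V : Type*} (G : SimpleGraph V) (T : Set V) : Prop :=
  IsTwinCover G T ∧ ∀ T' : Set V, IsTwinCover G T' → T.ncard ≤ T'.ncard

/-- Attach `ℓ` pendant vertices to the vertex `w` of `G`. -/
def attachPendants {V : Type*} (G : SimpleGraph V) (w : V) (ℓ : ℕ) :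
    SimpleGraph (V ⊕ Fin ℓ) where
  Adj x y :=
    match x, y with
    | Sum.inl a, Sum.inl b => G.Adj a b
    | Sum.inl a, Sum.inr _ => a = w
    | Sum.inr _, Sum.inl b => b = w
    | Sum.inr _, Sum.inr _ => False
  symm := by constructor; rintro (a | a) (b | b) h <;> simp_all <;> exact h.symm
  loopless := by constructor; rintro (a | a) h <;> simp_all

/-- each color class of a 2-distinguishing coloring is a
determining set; hence if `G` is 2-distinguishable then `det(G) ≤ ρ(G)`. -/
theorem det_le_cost {V : Type*} [Fintype V] (G : SimpleGraph V) :
    (∀ c : V → Bool, IsDistinguishing G c →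
      ∀ b : Bool, IsDetermining G {v | c v = b}) ∧
    ((∃ c : V → Bool, IsDistinguishing G c) → detNum G ≤ cost2 G) := by
  have part1 : ∀ c : V → Bool, IsDistinguishing G c →
      ∀ b : Bool, IsDetermining G {v | c v = b} := by
    intro c hc b φ hfix
    apply hc
    intro v
    have key : ∀ w, c w = b → φ w = w := fun w hw => hfix w hw
    by_cases hv : c v = b
    · rw [key v hv, hv]
    · by_cases hφv : c (φ v) = b
      · have := key (φ v) hφv
        -- hfix (φ v) hφv : φ (φ v) = φ v, injectivity gives φ v = v
        have h2 : φ (φ v) = φ v := hfix (φ v) hφv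
        have h3 : φ v = v := φ.toEquiv.injective h2
        rw [h3]
      · cases hb : c (φ v) <;> cases hb' : c v <;> cases b <;> simp_all
  refine ⟨part1, ?_⟩
  rintro ⟨c₀, hc₀⟩
  have hne : cost2 G ∈ {n | ∃ c : V → Bool, IsDistinguishing G c ∧
      n = (Finset.univ.filter fun v => c v = true).card} := by
    apply Nat.sInf_mem
    exact ⟨_, c₀, hc₀, rfl⟩
  obtain ⟨c, hc, hn⟩ := hne
  apply Nat.sInf_le
  refine ⟨Finset.univ.filter fun v => c v = true, hn.symm, ?_⟩
  have : (↑(Finset.univ.filter fun v => c v = true) : Set V) = {v | c v = true} := by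
    ext v; simp
  rw [this]
  exact part1 c hc true
end

section
/- If original vertices v_i and v_j are twins in a graph G, then for every level 0 ≤ s ≤ t, the vertices u_i^s and u_j^s are twins in the generalized Mycielskian μ_t(G). Conversely, if u_i^s and u_j^s are twins in μ_t(G) for some 0 ≤ s ≤ t, then v_i and v_j are twins in G. -/
open SimpleGraph

/-- twins in `G` give twins at every level of `μ_t(G)`, and twins
at some level of `μ_t(G)` come from twins in `G`. -/
theorem mycielskian_twins {V : Type*} (G : SimpleGraph V) (t : ℕ) (ht : 1 ≤ t)
    (i j : V) :
    (G.neighborSet i = G.neighborSet j → ∀ s : Fin (t + 1),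
      (Mycielskian G t).neighborSet (some (s, i)) =
        (Mycielskian G t).neighborSet (some (s, j))) ∧
    ((∃ s : Fin (t + 1),
        (Mycielskian G t).neighborSet (some (s, i)) =
          (Mycielskian G t).neighborSet (some (s, j))) →
      G.neighborSet i = G.neighborSet j) := by
  constructor
  · intro h s
    have hk : ∀ k, G.Adj i k ↔ G.Adj j k := by
      intro k
      have := Set.ext_iff.mp h k
      simpa [SimpleGraph.mem_neighborSet] using this
    ext x
    match x with
    | none => simp [SimpleGraph.mem_neighborSet, Mycielskian]
    | some (r, k) =>
      simp only [SimpleGraph.mem_neighborSet]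
      show (G.Adj i k ∧ _) ↔ (G.Adj j k ∧ _)
      rw [hk k]
  · rintro ⟨s, h⟩
    -- pick a level r compatible with s
    obtain ⟨r, hr⟩ : ∃ r : Fin (t + 1),
        (s.val = 0 ∧ r.val = 0) ∨ s.val + 1 = r.val ∨ r.val + 1 = s.val := by
      rcases Nat.eq_zero_or_pos s.val with h0 | hpos
      · exact ⟨⟨0, Nat.succ_pos t⟩, Or.inl ⟨h0, rfl⟩⟩
      · refine ⟨⟨s.val - 1, ?_⟩, Or.inr (Or.inr ?_)⟩
        · omega
        · simp only []
          omega
    ext k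
    have := Set.ext_iff.mp h (some (r, k))
    simp only [SimpleGraph.mem_neighborSet] at this ⊢
    have h1 : (Mycielskian G t).Adj (some (s, i)) (some (r, k)) ↔ G.Adj i k := by
      show (G.Adj i k ∧ _) ↔ _
      exact ⟨fun h => h.1, fun h => ⟨h, hr⟩⟩
    have h2 : (Mycielskian G t).Adj (some (s, j)) (some (r, k)) ↔ G.Adj j k := by
      show (G.Adj j k ∧ _) ↔ _
      exact ⟨fun h => h.1, fun h => ⟨h, hr⟩⟩
    rw [h1, h2] at this
    exact this
end

section
/- If S is a determining set for a graph G, then the set S̃ = {[x] : x ∈ S} of twin equivalence classes is a determining set for the quotient graph G̃. -/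
open SimpleGraph

lemma twinQuotient_adj_iff {V : Type*} (G : SimpleGraph V) (x y : V) :
    G.Adj x y ↔ (twinQuotient G).Adj (Quotient.mk (twinSetoid G) x)
      (Quotient.mk (twinSetoid G) y) := by
  constructor
  · intro h; exact ⟨x, y, rfl, rfl, h⟩
  · rintro ⟨p, q, hp, hq, h⟩
    have hpx : G.neighborSet p = G.neighborSet x := Quotient.exact hp
    have hqy : G.neighborSet q = G.neighborSet y := Quotient.exact hq
    have h1 : q ∈ G.neighborSet x := by rw [← hpx]; exact h
    have h2 : x ∈ G.neighborSet y := by rw [← hqy]; exact (G.adj_symm h1)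
    exact (G.adj_symm h2)

lemma mk_swap_eq {V : Type*} [DecidableEq V] (G : SimpleGraph V) {x y : V}
    (hxy : Quotient.mk (twinSetoid G) x = Quotient.mk (twinSetoid G) y) (u : V) :
    Quotient.mk (twinSetoid G) (Equiv.swap x y u) = Quotient.mk (twinSetoid G) u := by
  rcases eq_or_ne u x with rfl | hux
  · rw [Equiv.swap_apply_left]; exact hxy.symm
  rcases eq_or_ne u y with rfl | huy
  · rw [Equiv.swap_apply_right]; exact hxy
  · rw [Equiv.swap_apply_of_ne_of_ne hux huy]

/-- the image of a determining set in the twin quotient is a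
determining set for the quotient graph. -/
theorem twinQuotient_determining {V : Type*} (G : SimpleGraph V) (S : Set V)
    (hS : IsDetermining G S) :
    IsDetermining (twinQuotient G) (Quotient.mk (twinSetoid G) '' S) := by
  classical
  intro ψ hfix
  have hfix' : ∀ v ∈ S, ψ (Quotient.mk (twinSetoid G) v) = Quotient.mk (twinSetoid G) v := fun v hv => hfix _ ⟨v, hv, rfl⟩
  -- every class moved by ψ is a singleton
  have hsingle : ∀ x y : V, ψ (Quotient.mk (twinSetoid G) x) ≠ Quotient.mk (twinSetoid G) x → Quotient.mk (twinSetoid G) x = Quotient.mk (twinSetoid G) y → x = y := by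
    intro x y hmov hxy
    by_contra hne
    -- build the twin-swap automorphism
    let σ : G ≃g G :=
      { toEquiv := Equiv.swap x y
        map_rel_iff' := by
          intro u w
          show G.Adj (Equiv.swap x y u) (Equiv.swap x y w) ↔ G.Adj u w
          rw [twinQuotient_adj_iff G (Equiv.swap x y u) (Equiv.swap x y w),
            twinQuotient_adj_iff G u w, mk_swap_eq G hxy u, mk_swap_eq G hxy w] }
    have hσfix : ∀ v ∈ S, σ v = v := by
      intro v hv
      have h1 : Quotient.mk (twinSetoid G) v ≠ Quotient.mk (twinSetoid G) x := by
        intro h; exact hmov (h ▸ hfix' v hv)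
      have h2 : v ≠ x := fun h => h1 (by rw [h])
      have h3 : v ≠ y := fun h => h1 (by rw [h, hxy])
      exact Equiv.swap_apply_of_ne_of_ne h2 h3
    have hx := hS σ hσfix x
    have hσx : σ x = Equiv.swap x y x := rfl
    rw [hσx, Equiv.swap_apply_left] at hx
    exact hne hx.symm
  have hsingle' : ∀ x y : V, ψ.symm (Quotient.mk (twinSetoid G) x) ≠ Quotient.mk (twinSetoid G) x → Quotient.mk (twinSetoid G) x = Quotient.mk (twinSetoid G) y → x = y := by
    intro x y hmov hxy
    refine hsingle x y (fun h => hmov ?_) hxy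
    conv_lhs => rw [← h]
    exact ψ.symm_apply_apply _
  -- lift ψ to an automorphism of G
  let f : V → V := fun v => if ψ (Quotient.mk (twinSetoid G) v) = Quotient.mk (twinSetoid G) v then v else (ψ (Quotient.mk (twinSetoid G) v)).out
  let g : V → V := fun v => if ψ.symm (Quotient.mk (twinSetoid G) v) = Quotient.mk (twinSetoid G) v then v else (ψ.symm (Quotient.mk (twinSetoid G) v)).out
  have hmkf : ∀ v, Quotient.mk (twinSetoid G) (f v) = ψ (Quotient.mk (twinSetoid G) v) := by
    intro v
    by_cases h : ψ (Quotient.mk (twinSetoid G) v) = Quotient.mk (twinSetoid G) v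
    · simp [f, h]
    · simp only [f, if_neg h]; exact Quotient.out_eq _
  have hmkg : ∀ v, Quotient.mk (twinSetoid G) (g v) = ψ.symm (Quotient.mk (twinSetoid G) v) := by
    intro v
    by_cases h : ψ.symm (Quotient.mk (twinSetoid G) v) = Quotient.mk (twinSetoid G) v
    · simp [g, h]
    · simp only [g, if_neg h]; exact Quotient.out_eq _
  have hgf : ∀ v, g (f v) = v := by
    intro v
    by_cases h : ψ (Quotient.mk (twinSetoid G) v) = Quotient.mk (twinSetoid G) v
    · have h' : ψ.symm (Quotient.mk (twinSetoid G) v) = Quotient.mk (twinSetoid G) v := by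
        conv_lhs => rw [← h]
        exact ψ.symm_apply_apply _
      simp [f, g, h, h']
    · have hfv : Quotient.mk (twinSetoid G) (f v) = ψ (Quotient.mk (twinSetoid G) v) := hmkf v
      have h1 : ψ.symm (Quotient.mk (twinSetoid G) (f v)) = Quotient.mk (twinSetoid G) v := by
        rw [hfv]; exact ψ.symm_apply_apply _
      have h2 : ψ.symm (Quotient.mk (twinSetoid G) (f v)) ≠ Quotient.mk (twinSetoid G) (f v) := by
        rw [h1, hfv]; exact fun he => h he.symm
      have : g (f v) = (ψ.symm (Quotient.mk (twinSetoid G) (f v))).out := by simp [g, if_neg h2]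
      rw [this, h1]
      exact (hsingle v (Quotient.mk (twinSetoid G) v).out h (Quotient.out_eq _).symm).symm
  have hfg : ∀ v, f (g v) = v := by
    intro v
    by_cases h : ψ.symm (Quotient.mk (twinSetoid G) v) = Quotient.mk (twinSetoid G) v
    · have h' : ψ (Quotient.mk (twinSetoid G) v) = Quotient.mk (twinSetoid G) v := by
        conv_lhs => rw [← h]
        exact ψ.apply_symm_apply _
      simp [f, g, h, h']
    · have hgv : Quotient.mk (twinSetoid G) (g v) = ψ.symm (Quotient.mk (twinSetoid G) v) := hmkg v
      have h1 : ψ (Quotient.mk (twinSetoid G) (g v)) = Quotient.mk (twinSetoid G) v := by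
        rw [hgv]; exact ψ.apply_symm_apply _
      have h2 : ψ (Quotient.mk (twinSetoid G) (g v)) ≠ Quotient.mk (twinSetoid G) (g v) := by
        rw [h1, hgv]; exact fun he => h he.symm
      have : f (g v) = (ψ (Quotient.mk (twinSetoid G) (g v))).out := by simp [f, if_neg h2]
      rw [this, h1]
      exact (hsingle' v (Quotient.mk (twinSetoid G) v).out h (Quotient.out_eq _).symm).symm
  let φ : G ≃g G :=
    { toFun := f, invFun := g, left_inv := hgf, right_inv := hfg
      map_rel_iff' := by
        intro u w
        simp only [Equiv.coe_fn_mk]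
        rw [twinQuotient_adj_iff G (f u) (f w), twinQuotient_adj_iff G u w,
          hmkf u, hmkf w]
        exact ψ.map_rel_iff }
  have hφfix : ∀ v ∈ S, φ v = v := by
    intro v hv
    show f v = v
    simp [f, hfix' v hv]
  have hid : ∀ v, φ v = v := hS φ hφfix
  intro a
  induction a using Quotient.ind with
  | _ v =>
    have : f v = v := hid v
    calc ψ (Quotient.mk (twinSetoid G) v) = Quotient.mk (twinSetoid G) (f v) := (hmkf v).symm
    _ = Quotient.mk (twinSetoid G) v := by rw [this]
end

section
/- Every determining set of a graph G contains all but at most one vertex from each equivalence class of mutually twin vertices; consequently every minimum twin cover has size |V(G)| − |V(G̃)|, and det(G) ≥ |V(G)| − |V(G̃)|. -/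
open SimpleGraph

section Aux

variable {V : Type*} [Fintype V] (G : SimpleGraph V)

/-- Swapping two twins is a graph automorphism. -/
lemma aux_det_twin (S : Set V) (hS : IsDetermining G S) :
    ∀ x y : V, x ≠ y → G.neighborSet x = G.neighborSet y → x ∈ S ∨ y ∈ S := by
  classical
  intro x y hne hxy
  by_contra hcon
  push_neg at hcon
  have h1 : ∀ z, G.Adj x z ↔ G.Adj y z := fun z => by
    have := Set.ext_iff.mp hxy z
    exact this
  have hnadj : ¬ G.Adj x y := fun h => G.loopless.irrefl y ((h1 y).mp h)
  have key : ∀ a b, G.Adj a b → G.Adj (Equiv.swap x y a) (Equiv.swap x y b) := by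
    intro a b hab
    rcases eq_or_ne a x with hax | hax
    · rcases eq_or_ne b x with hbx | hbx
      · exact absurd (show G.Adj x x by rw [← hax]; rw [show b = a from hbx.trans hax.symm] at hab; exact hab)
          (G.loopless.irrefl x)
      · rcases eq_or_ne b y with hby | hby
        · exact absurd (show G.Adj x y by rw [← hax, ← hby]; exact hab) hnadj
        · rw [hax, Equiv.swap_apply_left, Equiv.swap_apply_of_ne_of_ne hbx hby]
          exact (h1 b).mp (by rw [← hax]; exact hab)
    · rcases eq_or_ne a y with hay | hay
      · rcases eq_or_ne b x with hbx | hbx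
        · exact absurd (show G.Adj x y by rw [← hay, ← hbx]; exact hab.symm) hnadj
        · rcases eq_or_ne b y with hby | hby
          · exact absurd (show G.Adj y y by rw [← hay]; rw [show b = a from hby.trans hay.symm] at hab; exact hab)
              (G.loopless.irrefl y)
          · rw [hay, Equiv.swap_apply_right, Equiv.swap_apply_of_ne_of_ne hbx hby]
            exact (h1 b).mpr (by rw [← hay]; exact hab)
      · rw [Equiv.swap_apply_of_ne_of_ne hax hay]
        rcases eq_or_ne b x with hbx | hbx
        · rw [hbx, Equiv.swap_apply_left]
          exact ((h1 a).mp (by rw [← hbx]; exact hab.symm)).symm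
        · rcases eq_or_ne b y with hby | hby
          · rw [hby, Equiv.swap_apply_right]
            exact ((h1 a).mpr (by rw [← hby]; exact hab.symm)).symm
          · rw [Equiv.swap_apply_of_ne_of_ne hbx hby]
            exact hab
  let φ : G ≃g G := ⟨Equiv.swap x y, by
    intro a b
    constructor
    · intro h
      have := key _ _ h
      simpa using this
    · exact key a b⟩
  have hφ : ∀ v, φ v = Equiv.swap x y v := fun v => rfl
  have hfix : ∀ v ∈ S, φ v = v := by
    intro v hv
    have hvx : v ≠ x := fun h => hcon.1 (h ▸ hv)
    have hvy : v ≠ y := fun h => hcon.2 (h ▸ hv)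
    rw [hφ]
    exact Equiv.swap_apply_of_ne_of_ne hvx hvy
  have := hS φ hfix x
  rw [hφ, Equiv.swap_apply_left] at this
  exact hne this.symm

/-- Any twin cover has at least `|V| - |V(G̃)|` vertices. -/
lemma aux_tc_lower (T : Set V) (hT : IsTwinCover G T) :
    Fintype.card V - Nat.card (Quotient (twinSetoid G)) ≤ T.ncard := by
  classical
  have hinj : Set.InjOn (Quotient.mk (twinSetoid G)) Tᶜ := by
    intro a ha b hb hab
    by_contra hne
    have htw : G.neighborSet a = G.neighborSet b := Quotient.exact hab
    rcases hT a b hne htw with h | h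
    · exact ha h
    · exact hb h
  have h1 : Tᶜ.ncard ≤ Nat.card (Quotient (twinSetoid G)) := by
    rw [← Nat.card_coe_set_eq]
    exact Nat.card_le_card_of_injective
      (fun v : ↥(Tᶜ) => Quotient.mk (twinSetoid G) v.1)
      (fun a b h => Subtype.ext (hinj a.2 b.2 h))
  have h2 : T.ncard + Tᶜ.ncard = Fintype.card V := by
    rw [← Nat.card_eq_fintype_card]
    exact Set.ncard_add_ncard_compl T
  omega

/-- There is a twin cover of size exactly `|V| - |V(G̃)|`. -/
lemma aux_tc_exists :
    ∃ T : Set V, IsTwinCover G T ∧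
      T.ncard = Fintype.card V - Nat.card (Quotient (twinSetoid G)) := by
  classical
  refine ⟨(Set.range (Quotient.out : Quotient (twinSetoid G) → V))ᶜ, ?_, ?_⟩
  · intro x y hne htw
    by_contra hcon
    push_neg at hcon
    simp only [Set.notMem_compl_iff, Set.mem_range] at hcon
    obtain ⟨⟨a, rfl⟩, ⟨b, rfl⟩⟩ := hcon
    have : Quotient.mk (twinSetoid G) a.out = Quotient.mk (twinSetoid G) b.out :=
      Quotient.sound htw
    rw [Quotient.out_eq, Quotient.out_eq] at this
    exact hne (this ▸ rfl)
  · have hinj : Function.Injective (Quotient.out : Quotient (twinSetoid G) → V) :=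
      Quotient.out_injective
    have hr : (Set.range (Quotient.out : Quotient (twinSetoid G) → V)).ncard =
        Nat.card (Quotient (twinSetoid G)) := by
      rw [← Nat.card_coe_set_eq, Nat.card_range_of_injective hinj]
    have h2 : (Set.range (Quotient.out : Quotient (twinSetoid G) → V)).ncard +
        (Set.range (Quotient.out : Quotient (twinSetoid G) → V))ᶜ.ncard =
        Fintype.card V := by
      rw [← Nat.card_eq_fintype_card]
      exact Set.ncard_add_ncard_compl _
    omega

end Aux

/-- determining sets contain all but at most one vertex of each
twin class; minimum twin covers have size `|V(G)| − |V(G̃)|`; and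
`det(G) ≥ |V(G)| − |V(G̃)|`. -/
theorem det_ge_twin_cover {V : Type*} [Fintype V] (G : SimpleGraph V) :
    (∀ S : Set V, IsDetermining G S → ∀ x y : V, x ≠ y →
        G.neighborSet x = G.neighborSet y → x ∈ S ∨ y ∈ S) ∧
    (∀ T : Set V, IsMinTwinCover G T →
        T.ncard = Fintype.card V - Nat.card (Quotient (twinSetoid G))) ∧
    Fintype.card V - Nat.card (Quotient (twinSetoid G)) ≤ detNum G := by
  classical
  refine ⟨fun S hS => aux_det_twin G S hS, ?_, ?_⟩
  · intro T hT
    obtain ⟨T0, hT0, hT0card⟩ := aux_tc_exists G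
    have h1 := aux_tc_lower G T hT.1
    have h2 := hT.2 T0 hT0
    omega
  · have hne : (Fintype.card V) ∈ {n | ∃ S : Finset V, S.card = n ∧ IsDetermining G ↑S} :=
      ⟨Finset.univ, Finset.card_univ, fun φ h v => h v (Finset.mem_coe.mpr (Finset.mem_univ v))⟩
    obtain ⟨S, hScard, hSdet⟩ := Nat.sInf_mem ⟨_, hne⟩
    have htc : IsTwinCover G ↑S := fun x y hne' htw => aux_det_twin G ↑S hSdet x y hne' htw
    have := aux_tc_lower G ↑S htc
    rw [Set.ncard_coe_finset] at this
    rw [detNum]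
    omega
end

section
/- Let T be a minimum twin cover of a graph G. Then |T| ≤ det(G) ≤ |T| + det(G̃). -/
open SimpleGraph

section Aux

variable {V : Type*} {G : SimpleGraph V}

lemma twinQuotient_adj_mk (x y : V) :
    (twinQuotient G).Adj (Quotient.mk (twinSetoid G) x) (Quotient.mk (twinSetoid G) y) ↔
      G.Adj x y := by
  constructor
  · rintro ⟨p, q, hp, hq, h⟩
    have hpx : G.neighborSet p = G.neighborSet x := Quotient.exact hp
    have hqy : G.neighborSet q = G.neighborSet y := Quotient.exact hq
    have h1 : G.Adj x q := by
      have : q ∈ G.neighborSet p := h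
      rwa [hpx] at this
    have h2 : G.Adj y x := by
      have : x ∈ G.neighborSet q := h1.symm
      rwa [hqy] at this
    exact h2.symm
  · exact fun h => ⟨x, y, rfl, rfl, h⟩

lemma nbr_eq_iff (φ : G ≃g G) (x y : V) :
    G.neighborSet (φ x) = G.neighborSet (φ y) ↔ G.neighborSet x = G.neighborSet y := by
  simp only [Set.ext_iff, SimpleGraph.mem_neighborSet]
  constructor
  · intro h z
    have := h (φ z)
    rwa [φ.map_adj_iff, φ.map_adj_iff] at this
  · intro h z
    have h1 : G.Adj (φ x) z ↔ G.Adj x (φ.symm z) := by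
      conv_lhs => rw [← φ.apply_symm_apply z]
      exact φ.map_adj_iff
    have h2 : G.Adj (φ y) z ↔ G.Adj y (φ.symm z) := by
      conv_lhs => rw [← φ.apply_symm_apply z]
      exact φ.map_adj_iff
    rw [h1, h2]
    exact h _

/-- The automorphism of the twin quotient induced by an automorphism of `G`. -/
def liftIso (φ : G ≃g G) : twinQuotient G ≃g twinQuotient G where
  toEquiv :=
  { toFun := Quotient.map φ fun a b h => (nbr_eq_iff φ a b).mpr h
    invFun := Quotient.map φ.symm fun a b h => (nbr_eq_iff φ.symm a b).mpr h
    left_inv := by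
      rintro ⟨a⟩
      exact congrArg (Quotient.mk (twinSetoid G)) (φ.symm_apply_apply a)
    right_inv := by
      rintro ⟨a⟩
      exact congrArg (Quotient.mk (twinSetoid G)) (φ.apply_symm_apply a) }
  map_rel_iff' := by
    rintro ⟨a⟩ ⟨b⟩
    show (twinQuotient G).Adj (Quotient.mk (twinSetoid G) (φ a))
        (Quotient.mk (twinSetoid G) (φ b)) ↔
      (twinQuotient G).Adj (Quotient.mk (twinSetoid G) a) (Quotient.mk (twinSetoid G) b)
    rw [twinQuotient_adj_mk, twinQuotient_adj_mk]
    exact φ.map_adj_iff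

/-- Swapping two nonadjacent twins is an automorphism. -/
def swapIso [DecidableEq V] (x y : V) (hN : G.neighborSet x = G.neighborSet y) :
    G ≃g G where
  toEquiv := Equiv.swap x y
  map_rel_iff' := by
    have hAdj : ∀ z, G.Adj x z ↔ G.Adj y z := by
      intro z
      have := Set.ext_iff.mp hN z
      simpa [SimpleGraph.mem_neighborSet] using this
    have hno : ¬ G.Adj x y := fun h => G.loopless.irrefl y ((hAdj y).mp h)
    have key : ∀ a b, G.Adj a b → G.Adj (Equiv.swap x y a) (Equiv.swap x y b) := by
      intro a b hab
      rcases eq_or_ne a x with h | hax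
      · subst h
        have hbx : b ≠ a := fun h => G.loopless.irrefl a (h ▸ hab)
        have hby : b ≠ y := fun h => hno (h ▸ hab)
        rw [Equiv.swap_apply_left, Equiv.swap_apply_of_ne_of_ne hbx hby]
        exact (hAdj b).mp hab
      rcases eq_or_ne a y with h | hay
      · subst h
        have hbx : b ≠ x := fun h => hno ((h ▸ hab).symm)
        have hby : b ≠ a := fun h => G.loopless.irrefl a (h ▸ hab)
        rw [Equiv.swap_apply_right, Equiv.swap_apply_of_ne_of_ne hbx hby]
        exact (hAdj b).mpr hab
      · rw [Equiv.swap_apply_of_ne_of_ne hax hay]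
        rcases eq_or_ne b x with h | hbx
        · subst h
          rw [Equiv.swap_apply_left]
          exact ((hAdj a).mp hab.symm).symm
        rcases eq_or_ne b y with h | hby
        · subst h
          rw [Equiv.swap_apply_right]
          exact ((hAdj a).mpr hab.symm).symm
        · rw [Equiv.swap_apply_of_ne_of_ne hbx hby]
          exact hab
    intro a b
    constructor
    · intro h
      have := key _ _ h
      simpa [Equiv.swap_apply_self] using this
    · exact key a b

end Aux

/-- `|T| ≤ det(G) ≤ |T| + det(G̃)` for a minimum twin cover `T`. -/
theorem det_twin_cover_bounds {V : Type*} [Fintype V] (G : SimpleGraph V)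
    (T : Set V) (hT : IsMinTwinCover G T) :
    T.ncard ≤ detNum G ∧ detNum G ≤ T.ncard + detNum (twinQuotient G) := by
  classical
  haveI : Fintype (Quotient (twinSetoid G)) := Fintype.ofFinite _
  haveI : Fintype T := Fintype.ofFinite _
  constructor
  · -- lower bound
    have hne : {n | ∃ S : Finset V, S.card = n ∧ IsDetermining G ↑S}.Nonempty :=
      ⟨Finset.univ.card, Finset.univ, rfl, fun φ h v => h v (by simp)⟩
    obtain ⟨S, hScard, hSdet⟩ := Nat.sInf_mem hne
    have hcover : IsTwinCover G ↑S := by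
      intro x y hxy hN
      by_contra hc
      push_neg at hc
      obtain ⟨hx, hy⟩ := hc
      have hfix : ∀ v ∈ (↑S : Set V), (swapIso x y hN) v = v := by
        intro v hv
        have hvx : v ≠ x := fun h => hx (h ▸ hv)
        have hvy : v ≠ y := fun h => hy (h ▸ hv)
        exact Equiv.swap_apply_of_ne_of_ne hvx hvy
      have h1 : (swapIso x y hN) x = x := hSdet (swapIso x y hN) hfix x
      have h2 : (swapIso x y hN) x = y := Equiv.swap_apply_left x y
      exact hxy (h2.symm.trans h1).symm
    have := hT.2 ↑S hcover
    rwa [Set.ncard_coe_finset, hScard] at this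
  · -- upper bound
    have hneQ : {n | ∃ S : Finset (Quotient (twinSetoid G)), S.card = n ∧
        IsDetermining (twinQuotient G) ↑S}.Nonempty :=
      ⟨Finset.univ.card, Finset.univ, rfl, fun φ h v => h v (by simp)⟩
    obtain ⟨SQ, hSQcard, hSQdet⟩ := Nat.sInf_mem hneQ
    set F : Finset V := T.toFinset ∪ SQ.image Quotient.out with hF
    have hdetF : IsDetermining G ↑F := by
      intro φ hfix v
      have hfixT : ∀ w ∈ T, φ w = w := by
        intro w hw
        exact hfix w (Finset.mem_union_left _ (Set.mem_toFinset.mpr hw))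
      have hfixQ : ∀ c ∈ SQ, (liftIso φ) c = c := by
        intro c hc
        have hmem : c.out ∈ F := Finset.mem_union_right _ (Finset.mem_image.mpr ⟨c, hc, rfl⟩)
        have hout : φ c.out = c.out := hfix _ hmem
        conv_lhs => rw [← c.out_eq]
        show Quotient.mk (twinSetoid G) (φ c.out) = c
        rw [hout, c.out_eq]
      have hall := hSQdet (liftIso φ) (fun c hc => hfixQ c hc)
      have h2 : Quotient.mk (twinSetoid G) (φ v) = Quotient.mk (twinSetoid G) v :=
        hall (Quotient.mk (twinSetoid G) v)
      have htwin : G.neighborSet (φ v) = G.neighborSet v := Quotient.exact h2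
      by_cases hv : φ v = v
      · exact hv
      · rcases hT.1 (φ v) v hv htwin with h | h
        · exact φ.injective (hfixT _ h)
        · exact hfixT _ h
    have h1 : detNum G ≤ F.card := Nat.sInf_le ⟨F, rfl, hdetF⟩
    have h2 : F.card ≤ T.toFinset.card + (SQ.image Quotient.out).card :=
      Finset.card_union_le _ _
    have h3 : (SQ.image Quotient.out).card ≤ SQ.card := Finset.card_image_le
    have h4 : T.ncard = T.toFinset.card := Set.ncard_eq_toFinset_card' T
    have h5 : detNum (twinQuotient G) = SQ.card := hSQcard.symm
    omega
end

section
/- Let G be a graph with a minimum twin cover T, and let S̃ be a determining set for the quotient graph G̃ containing T̃ = {[x] : x ∈ T}. Let R = {x ∈ V(G) : [x] ∈ S̃ \ T̃}. Then S = T ∪ R is a determining set for G; moreover, if S̃ has minimum size among determining sets for G̃ containing T̃, then S is a minimum-size determining set for G. -/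
open SimpleGraph

namespace DetFromQuotientAux

open scoped Classical

variable {V : Type*}

lemma twin_adj_congr (G : SimpleGraph V) {x y : V}
    (h : G.neighborSet x = G.neighborSet y) (z : V) : G.Adj x z ↔ G.Adj y z := by
  constructor <;> intro hz
  · have hm : z ∈ G.neighborSet x := hz
    rw [h] at hm; exact hm
  · have hm : z ∈ G.neighborSet y := hz
    rw [← h] at hm; exact hm

lemma quot_adj (G : SimpleGraph V) (x y : V) :
    (twinQuotient G).Adj (Quotient.mk (twinSetoid G) x) (Quotient.mk (twinSetoid G) y) ↔
      G.Adj x y := by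
  constructor
  · rintro ⟨p, q, hp, hq, h⟩
    have h1 : G.neighborSet p = G.neighborSet x := Quotient.exact hp
    have h2 : G.neighborSet q = G.neighborSet y := Quotient.exact hq
    have h3 : G.Adj x q := (twin_adj_congr G h1 q).mp h
    exact ((twin_adj_congr G h2 x).mp h3.symm).symm
  · exact fun h => ⟨x, y, rfl, rfl, h⟩

/-- Swapping twins is an automorphism. -/
noncomputable def swapIso (G : SimpleGraph V) {x y : V}
    (h : G.neighborSet x = G.neighborSet y) : G ≃g G where
  toEquiv := Equiv.swap x y
  map_rel_iff' := by
    have hN : ∀ a, G.neighborSet (Equiv.swap x y a) = G.neighborSet a := by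
      intro a
      rcases eq_or_ne a x with rfl | hax
      · rw [Equiv.swap_apply_left]; exact h.symm
      rcases eq_or_ne a y with rfl | hay
      · rw [Equiv.swap_apply_right]; exact h
      · rw [Equiv.swap_apply_of_ne_of_ne hax hay]
    intro a b
    show G.Adj (Equiv.swap x y a) (Equiv.swap x y b) ↔ G.Adj a b
    calc G.Adj (Equiv.swap x y a) (Equiv.swap x y b)
        ↔ G.Adj a (Equiv.swap x y b) := twin_adj_congr G (hN a) _
      _ ↔ G.Adj (Equiv.swap x y b) a := adj_comm G _ _
      _ ↔ G.Adj b a := twin_adj_congr G (hN b) a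
      _ ↔ G.Adj a b := adj_comm G _ _

lemma det_twinCover (G : SimpleGraph V) {B : Set V}
    (hB : IsDetermining G B) : IsTwinCover G B := by
  intro x y hxy h
  by_contra hc
  push_neg at hc
  have hfix : ∀ v ∈ B, (swapIso G h) v = v := by
    intro v hv
    exact Equiv.swap_apply_of_ne_of_ne (fun e => hc.1 (e ▸ hv)) (fun e => hc.2 (e ▸ hv))
  have hx := hB (swapIso G h) hfix x
  have : (swapIso G h) x = y := Equiv.swap_apply_left x y
  rw [this] at hx
  exact hxy hx.symm

lemma class_singleton (G : SimpleGraph V) {T : Set V} (hTc : IsTwinCover G T)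
    {v : V} (hv : Quotient.mk (twinSetoid G) v ∉ Quotient.mk (twinSetoid G) '' T)
    {w : V} (hw : Quotient.mk (twinSetoid G) w = Quotient.mk (twinSetoid G) v) : w = v := by
  by_contra hne
  have htw : G.neighborSet w = G.neighborSet v := Quotient.exact hw
  rcases hTc w v hne htw with h | h
  · exact hv ⟨w, h, hw⟩
  · exact hv ⟨v, h, rfl⟩

/-- Lift of a quotient automorphism to `V`. -/
noncomputable def liftMap (G : SimpleGraph V) (T : Set V)
    (ψ : Quotient (twinSetoid G) ≃ Quotient (twinSetoid G)) : V → V :=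
  fun v => if Quotient.mk (twinSetoid G) v ∈ Quotient.mk (twinSetoid G) '' T then v
    else (ψ (Quotient.mk (twinSetoid G) v)).out

lemma liftMap_mk (G : SimpleGraph V) (T : Set V)
    (ψ : Quotient (twinSetoid G) ≃ Quotient (twinSetoid G))
    (hψ : ∀ a ∈ Quotient.mk (twinSetoid G) '' T, ψ a = a) (v : V) :
    Quotient.mk (twinSetoid G) (liftMap G T ψ v) = ψ (Quotient.mk (twinSetoid G) v) := by
  by_cases h : Quotient.mk (twinSetoid G) v ∈ Quotient.mk (twinSetoid G) '' T
  · rw [liftMap, if_pos h, hψ _ h]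
  · rw [liftMap, if_neg h]; exact Quotient.out_eq _

lemma symm_fix (G : SimpleGraph V) (T : Set V)
    (ψ : Quotient (twinSetoid G) ≃ Quotient (twinSetoid G))
    (hψ : ∀ a ∈ Quotient.mk (twinSetoid G) '' T, ψ a = a) :
    ∀ a ∈ Quotient.mk (twinSetoid G) '' T, ψ.symm a = a := by
  intro a ha
  conv_lhs => rw [← hψ a ha]
  exact ψ.symm_apply_apply a

lemma liftMap_comp (G : SimpleGraph V) {T : Set V} (hTc : IsTwinCover G T)
    (ψ : Quotient (twinSetoid G) ≃ Quotient (twinSetoid G))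
    (hψ : ∀ a ∈ Quotient.mk (twinSetoid G) '' T, ψ a = a) (v : V) :
    liftMap G T ψ.symm (liftMap G T ψ v) = v := by
  by_cases h : Quotient.mk (twinSetoid G) v ∈ Quotient.mk (twinSetoid G) '' T
  · rw [liftMap, liftMap, if_pos h, if_pos h]
  · have h1 : Quotient.mk (twinSetoid G) (liftMap G T ψ v) =
        ψ (Quotient.mk (twinSetoid G) v) := liftMap_mk G T ψ hψ v
    have h2 : ψ (Quotient.mk (twinSetoid G) v) ∉ Quotient.mk (twinSetoid G) '' T := by
      intro hc
      have := symm_fix G T ψ hψ _ hc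
      rw [ψ.symm_apply_apply] at this
      exact h (this ▸ hc)
    have hrw : liftMap G T ψ.symm (liftMap G T ψ v) =
        if Quotient.mk (twinSetoid G) (liftMap G T ψ v) ∈ Quotient.mk (twinSetoid G) '' T
        then liftMap G T ψ v
        else (ψ.symm (Quotient.mk (twinSetoid G) (liftMap G T ψ v))).out := rfl
    rw [hrw, h1, if_neg h2, ψ.symm_apply_apply]
    exact class_singleton G hTc h (Quotient.out_eq _)

/-- A determining set of `G` pushes to a determining set of the quotient
once the twin-cover classes are added. -/
lemma quot_det (G : SimpleGraph V) {T B : Set V} (hTc : IsTwinCover G T)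
    (hB : IsDetermining G B) :
    IsDetermining (twinQuotient G)
      ((Quotient.mk (twinSetoid G) '' B) ∪ (Quotient.mk (twinSetoid G) '' T)) := by
  intro ψ hfix
  have hψT : ∀ a ∈ Quotient.mk (twinSetoid G) '' T, ψ.toEquiv a = a :=
    fun a ha => hfix a (Or.inr ha)
  have hψsT : ∀ a ∈ Quotient.mk (twinSetoid G) '' T, ψ.toEquiv.symm a = a :=
    symm_fix G T ψ.toEquiv hψT
  let e : V ≃ V :=
    ⟨liftMap G T ψ.toEquiv, liftMap G T ψ.toEquiv.symm,
      liftMap_comp G hTc ψ.toEquiv hψT, by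
        intro v
        have := liftMap_comp G hTc ψ.toEquiv.symm hψsT v
        simpa using this⟩
  have key : ∀ a b : V, G.Adj (liftMap G T ψ.toEquiv a) (liftMap G T ψ.toEquiv b) ↔ G.Adj a b := by
    intro a b
    rw [← quot_adj, ← quot_adj G a b, liftMap_mk G T ψ.toEquiv hψT,
      liftMap_mk G T ψ.toEquiv hψT]
    exact ψ.map_rel_iff
  let φ : G ≃g G := ⟨e, key _ _⟩
  have hfB : ∀ b ∈ B, φ b = b := by
    intro b hb
    show liftMap G T ψ.toEquiv b = b
    by_cases h : Quotient.mk (twinSetoid G) b ∈ Quotient.mk (twinSetoid G) '' T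
    · rw [liftMap, if_pos h]
    · have hb' : ψ.toEquiv (Quotient.mk (twinSetoid G) b) = Quotient.mk (twinSetoid G) b :=
        hfix _ (Or.inl ⟨b, hb, rfl⟩)
      rw [liftMap, if_neg h, hb']
      exact class_singleton G hTc h (Quotient.out_eq _)
  have hid : ∀ v, liftMap G T ψ.toEquiv v = v := hB φ hfB
  intro a
  obtain ⟨v, rfl⟩ := Quotient.exists_rep a
  have h1 := liftMap_mk G T ψ.toEquiv hψT v
  rw [hid v] at h1
  exact h1.symm

/-- Part 1: the lifted set is determining for `G`. -/
lemma part1 (G : SimpleGraph V) {T : Set V} (hTc : IsTwinCover G T)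
    (St : Set (Quotient (twinSetoid G)))
    (hTSt : Quotient.mk (twinSetoid G) '' T ⊆ St)
    (hSt : IsDetermining (twinQuotient G) St) :
    IsDetermining G (T ∪ {x : V | Quotient.mk (twinSetoid G) x ∈
      St \ (Quotient.mk (twinSetoid G) '' T)}) := by
  intro φ hfix
  have hadj : ∀ (a z : V), G.Adj (φ a) z ↔ G.Adj a (φ.symm z) := by
    intro a z
    conv_lhs => rw [← φ.apply_symm_apply z]
    exact φ.map_rel_iff
  have hr : ∀ a b : V, G.neighborSet a = G.neighborSet b ↔
      G.neighborSet (φ a) = G.neighborSet (φ b) := by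
    intro a b
    constructor
    · intro h
      ext z
      simp only [SimpleGraph.mem_neighborSet]
      rw [hadj a z, hadj b z]
      exact twin_adj_congr G h _
    · intro h
      ext z
      simp only [SimpleGraph.mem_neighborSet]
      rw [← φ.map_rel_iff (a := a) (b := z), ← φ.map_rel_iff (a := b) (b := z)]
      exact twin_adj_congr G h _
  let ψe : Quotient (twinSetoid G) ≃ Quotient (twinSetoid G) :=
    ⟨Quotient.map φ (fun a b h => (hr a b).mp h),
     Quotient.map φ.symm (fun a b h => by
        have := (hr (φ.symm a) (φ.symm b)).mpr
        simp only [RelIso.apply_symm_apply] at this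
        exact this h),
     by
       intro q
       obtain ⟨v, rfl⟩ := Quotient.exists_rep q
       exact congrArg (Quotient.mk (twinSetoid G)) (φ.symm_apply_apply v),
     by
       intro q
       obtain ⟨v, rfl⟩ := Quotient.exists_rep q
       exact congrArg (Quotient.mk (twinSetoid G)) (φ.apply_symm_apply v)⟩
  have hψemk : ∀ v : V, ψe (Quotient.mk (twinSetoid G) v) =
      Quotient.mk (twinSetoid G) (φ v) := fun v => rfl
  let ψ : twinQuotient G ≃g twinQuotient G :=
    ⟨ψe, by
      intro a b
      obtain ⟨x, rfl⟩ := Quotient.exists_rep a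
      obtain ⟨y, rfl⟩ := Quotient.exists_rep b
      show (twinQuotient G).Adj (ψe _) (ψe _) ↔ _
      rw [hψemk, hψemk, quot_adj, quot_adj]
      exact φ.map_rel_iff⟩
  have hψmk : ∀ v : V, ψ (Quotient.mk (twinSetoid G) v) =
      Quotient.mk (twinSetoid G) (φ v) := fun v => rfl
  have hfixψ : ∀ a ∈ St, ψ a = a := by
    intro a ha
    by_cases h : a ∈ Quotient.mk (twinSetoid G) '' T
    · obtain ⟨t, htT, rfl⟩ := h
      rw [hψmk, hfix t (Or.inl htT)]
    · obtain ⟨x, rfl⟩ := Quotient.exists_rep a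
      rw [hψmk, hfix x (Or.inr ⟨ha, h⟩)]
  have hid := hSt ψ hfixψ
  intro v
  by_contra hne
  have hq : Quotient.mk (twinSetoid G) (φ v) = Quotient.mk (twinSetoid G) v := by
    have h0 := hid (Quotient.mk (twinSetoid G) v)
    rw [hψmk] at h0
    exact h0
  have htw : G.neighborSet (φ v) = G.neighborSet v := Quotient.exact hq
  rcases hTc (φ v) v hne htw with h | h
  · have h1 := hfix (φ v) (Or.inl h)
    exact hne (φ.injective h1)
  · exact hne (hfix v (Or.inl h))

end DetFromQuotientAux

/-- for a minimum twin cover `T` and a determining set `S̃` for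
`G̃` containing `T̃`, the set `S = T ∪ R` is determining for `G`, and is of
minimum size whenever `S̃` is of minimum size among determining sets for `G̃`
containing `T̃`. -/
theorem det_from_quotient {V : Type*} [Fintype V] (G : SimpleGraph V)
    (T : Set V) (hT : IsMinTwinCover G T)
    (St : Set (Quotient (twinSetoid G)))
    (hTSt : Quotient.mk (twinSetoid G) '' T ⊆ St)
    (hSt : IsDetermining (twinQuotient G) St) :
    IsDetermining G (T ∪ {x : V | Quotient.mk (twinSetoid G) x ∈
      St \ (Quotient.mk (twinSetoid G) '' T)}) ∧
    ((∀ A : Set (Quotient (twinSetoid G)), IsDetermining (twinQuotient G) A →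
        Quotient.mk (twinSetoid G) '' T ⊆ A → St.ncard ≤ A.ncard) →
      ∀ B : Set V, IsDetermining G B →
        (T ∪ {x : V | Quotient.mk (twinSetoid G) x ∈
          St \ (Quotient.mk (twinSetoid G) '' T)}).ncard ≤ B.ncard) := by
  classical
  obtain ⟨hTc, hTmin⟩ := hT
  have hFinQ : Finite (Quotient (twinSetoid G)) := Quotient.finite _
  refine ⟨DetFromQuotientAux.part1 G hTc St hTSt hSt, ?_⟩
  intro hmin B hB
  set mk : V → Quotient (twinSetoid G) := Quotient.mk (twinSetoid G) with hmkdef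
  set Tt : Set (Quotient (twinSetoid G)) := mk '' T with hTtdef
  set R : Set V := {x : V | mk x ∈ St \ Tt} with hRdef
  -- |T ∪ R| = |T| + |R|
  have hdisj : Disjoint T R := by
    rw [Set.disjoint_left]
    intro x hxT hxR
    exact hxR.2 ⟨x, hxT, rfl⟩
  have hScard : (T ∪ R).ncard = T.ncard + R.ncard :=
    Set.ncard_union_eq hdisj (Set.toFinite _) (Set.toFinite _)
  -- |R| = |St \ Tt|
  have himg : mk '' R = St \ Tt := by
    ext a
    constructor
    · rintro ⟨x, hx, rfl⟩; exact hx
    · intro ha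
      obtain ⟨x, rfl⟩ := Quotient.exists_rep a
      exact ⟨x, ha, rfl⟩
  have hinjR : Set.InjOn mk R := by
    intro x hx y hy hxy
    exact DetFromQuotientAux.class_singleton G hTc hy.2 hxy
  have hRcard : R.ncard = (St \ Tt).ncard := by
    rw [← himg, Set.ncard_image_of_injOn hinjR]
  -- split B
  set B1 : Set V := B ∩ {x : V | mk x ∈ Tt} with hB1def
  set B2 : Set V := B \ {x : V | mk x ∈ Tt} with hB2def
  have hBsplit : B1.ncard + B2.ncard = B.ncard :=
    Set.ncard_inter_add_ncard_diff_eq_ncard B _ (Set.toFinite _)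
  -- B1 is a twin cover, so |T| ≤ |B1|
  have hBtc : IsTwinCover G B := DetFromQuotientAux.det_twinCover G hB
  have hB1tc : IsTwinCover G B1 := by
    intro x y hxy htw
    have hmkxy : mk x = mk y := Quotient.sound htw
    have hTt : mk x ∈ Tt := by
      rcases hTc x y hxy htw with h | h
      · exact ⟨x, h, rfl⟩
      · exact ⟨y, h, hmkxy.symm⟩
    rcases hBtc x y hxy htw with h | h
    · exact Or.inl ⟨h, hTt⟩
    · refine Or.inr ⟨h, ?_⟩
      show mk y ∈ Tt
      rw [← hmkxy]; exact hTt
  have hTB1 : T.ncard ≤ B1.ncard := hTmin B1 hB1tc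
  -- |B2| = |(mk '' B) \ Tt|
  have himgB2 : mk '' B2 = (mk '' B) \ Tt := by
    ext a
    constructor
    · rintro ⟨x, hx, rfl⟩
      exact ⟨⟨x, hx.1, rfl⟩, hx.2⟩
    · rintro ⟨⟨x, hxB, rfl⟩, hx⟩
      exact ⟨x, ⟨hxB, hx⟩, rfl⟩
  have hinjB2 : Set.InjOn mk B2 := by
    intro x hx y hy hxy
    exact DetFromQuotientAux.class_singleton G hTc hy.2 hxy
  have hB2card : B2.ncard = ((mk '' B) \ Tt).ncard := by
    rw [← himgB2, Set.ncard_image_of_injOn hinjB2]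
  -- quotient determining set from B
  have hAdet : IsDetermining (twinQuotient G) ((mk '' B) ∪ Tt) :=
    DetFromQuotientAux.quot_det G hTc hB
  have hStA : St.ncard ≤ ((mk '' B) ∪ Tt).ncard :=
    hmin _ hAdet Set.subset_union_right
  -- |(mk '' B) ∪ Tt| = |Tt| + |mk '' B \ Tt|
  have hAcard : ((mk '' B) ∪ Tt).ncard = Tt.ncard + ((mk '' B) \ Tt).ncard := by
    rw [Set.union_comm, ← Set.union_diff_self]
    exact Set.ncard_union_eq Set.disjoint_sdiff_right (Set.toFinite _) (Set.toFinite _)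
  -- |St| = |Tt| + |St \ Tt|
  have hStcard : Tt.ncard + (St \ Tt).ncard = St.ncard := by
    have h0 := Set.ncard_inter_add_ncard_diff_eq_ncard St Tt (Set.toFinite _)
    rw [Set.inter_eq_self_of_subset_right hTSt] at h0
    exact h0
  omega
end
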